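/- Let μ be a finite positive Borel measure on the unit circle T whose Radon–Nikodym derivative μ' with respect to Lebesgue measure on T satisfies: log μ' is not Lebesgue-integrable on T. Fix a sequence {w_n} ⊂ T, and for each n let ζ_{0n}, …, ζ_{nn} ∈ T be the zeros of the para-orthogonal polynomial B_{n+1}(w_n,·) and K_n the Christoffel kernel. Then for every continuous function f : T → ℂ, the Szegő quadrature sums Q_n(f) := Σ_{j=0}^n f(ζ_{jn}) / K_n(ζ_{jn}, ζ_{jn}) converge to ∫_T f dμ as n → ∞. -/

import Mathlib

set_option linter.unusedSectionVars false
set_option maxHeartbeats 1000000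


open MeasureTheory Polynomial Filter
open scoped ComplexConjugate Topology

/-- The Christoffel kernel `K_n(w,z) = ∑_{j=0}^n conj(φ_j(w)) φ_j(z)`. -/
noncomputable def christoffelK (φ : ℕ → Polynomial ℂ) (n : ℕ) (w z : ℂ) : ℂ :=
  ∑ j ∈ Finset.range (n + 1), conj ((φ j).eval w) * (φ j).eval z

/-- The para-orthogonal polynomial `B_{n+1}(w,z) = (1 − conj(w) z) K_n(w,z)`. -/
noncomputable def paraOrtho (φ : ℕ → Polynomial ℂ) (n : ℕ) (w z : ℂ) : ℂ :=
  (1 - conj w * z) * christoffelK φ n w z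

/-- The `j`-th fundamental (Lagrange) polynomial for the nodes `ζ`:
`ℓ_{jn}(z) = K_n(z, ζ_{jn}) / K_n(ζ_{jn}, ζ_{jn})`.  Note that by Hermitian symmetry of the
kernel, `K_n(z, ζ) = conj (K_n(ζ, z))`; as a *polynomial* in `z` (of degree `n`, as in the
paper) the fundamental polynomial is `z ↦ K_n(ζ_{jn}, z) / K_n(ζ_{jn}, ζ_{jn})`, with
`K_n(ζ_{jn}, ζ_{jn}) = ∑_k |φ_k(ζ_{jn})|²` a positive real number. -/
noncomputable def ellFun (φ : ℕ → Polynomial ℂ) (n : ℕ) (ζ : Fin (n + 1) → ℂ)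
    (j : Fin (n + 1)) (z : ℂ) : ℂ :=
  christoffelK φ n (ζ j) z / christoffelK φ n (ζ j) (ζ j)

/-- The `n`-th Lagrange interpolation polynomial of `f` at the nodes `ζ`:
`L_n(f)(z) = ∑_{j=0}^n f(ζ_{jn}) ℓ_{jn}(z)`. -/
noncomputable def lagrangeInterp (φ : ℕ → Polynomial ℂ) (n : ℕ) (ζ : Fin (n + 1) → ℂ)
    (f : ℂ → ℂ) (z : ℂ) : ℂ :=
  ∑ j : Fin (n + 1), f (ζ j) * ellFun φ n ζ j z

/-- The Lebesgue (arclength) measure `𝔪` on the unit circle `T ⊆ ℂ`, obtained as the image of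
Lebesgue measure on `(0, 2π]` under `θ ↦ e^{iθ}`. -/
noncomputable def circleLeb : Measure ℂ :=
  Measure.map (fun θ : ℝ => Complex.exp (θ * Complex.I))
    (MeasureTheory.volume.restrict (Set.Ioc 0 (2 * Real.pi)))

namespace SzegoQuad

/-! ### Elementary facts about the unit circle -/

lemma uc_mul_conj {z : ℂ} (h : ‖z‖ = 1) : z * conj z = 1 := by
  rw [Complex.mul_conj z]
  norm_cast
  simp [← Complex.sq_norm, h]

lemma uc_pow_mul_conj_pow {z : ℂ} (h : ‖z‖ = 1) (k : ℕ) : z ^ k * (conj z) ^ k = 1 := by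
  rw [← mul_pow, uc_mul_conj h, one_pow]

lemma uc_pow_sub {z : ℂ} (h : ‖z‖ = 1) {k m : ℕ} (hkm : k ≤ m) :
    z ^ (m - k) = z ^ m * (conj z) ^ k := by
  calc z ^ (m - k) = z ^ (m - k) * (z ^ k * (conj z) ^ k) := by
        rw [uc_pow_mul_conj_pow h, mul_one]
    _ = z ^ m * (conj z) ^ k := by rw [← mul_assoc, ← pow_add, Nat.sub_add_cancel hkm]

lemma uc_conj_pow_sub {z : ℂ} (h : ‖z‖ = 1) {k m : ℕ} (hkm : k ≤ m) :
    (conj z) ^ (m - k) = (conj z) ^ m * z ^ k := by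
  have h' : ‖conj z‖ = 1 := by rwa [RCLike.norm_conj]
  have := uc_pow_sub h' hkm
  rwa [Complex.conj_conj] at this

/-! ### Measure-theoretic preliminaries -/

variable {μ : Measure ℂ} [IsFiniteMeasure μ]

lemma ae_sphere (hμT : μ (Metric.sphere (0 : ℂ) 1)ᶜ = 0) :
    ∀ᵐ z ∂μ, ‖z‖ = 1 := by
  have h : ∀ᵐ z ∂μ, z ∈ Metric.sphere (0 : ℂ) 1 := by
    have he : {z : ℂ | ¬ z ∈ Metric.sphere (0 : ℂ) 1} = (Metric.sphere (0 : ℂ) 1)ᶜ := rfl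
    rw [ae_iff, he]
    exact hμT
  filter_upwards [h] with z hz
  simpa using mem_sphere_zero_iff_norm.mp hz

lemma integC (hμT : μ (Metric.sphere (0 : ℂ) 1)ᶜ = 0)
    {E : Type*} [NormedAddCommGroup E] {g : ℂ → E} (hg : Continuous g) :
    Integrable g μ := by
  obtain ⟨C, hC⟩ := (isCompact_sphere (0 : ℂ) 1).exists_bound_of_continuousOn hg.continuousOn
  refine Integrable.mono' (integrable_const C) hg.aestronglyMeasurable ?_
  filter_upwards [ae_sphere hμT] with z hz
  exact hC z (by simpa [mem_sphere_zero_iff_norm] using hz)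

/-! ### The kernel as a polynomial -/

variable (φ : ℕ → Polynomial ℂ)

/-- The Christoffel kernel, as a polynomial in the second variable. -/
noncomputable def kerPoly (n : ℕ) (ξ : ℂ) : Polynomial ℂ :=
  ∑ m ∈ Finset.range (n + 1), Polynomial.C (conj ((φ m).eval ξ)) * φ m

lemma kerPoly_eval (n : ℕ) (ξ z : ℂ) :
    (kerPoly φ n ξ).eval z = christoffelK φ n ξ z := by
  simp [kerPoly, christoffelK, eval_finset_sum]

lemma christoffelK_fin (n : ℕ) (w z : ℂ) :
    christoffelK φ n w z = ∑ m : Fin (n + 1), conj ((φ (m : ℕ)).eval w) * (φ (m : ℕ)).eval z :=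
  (Fin.sum_univ_eq_sum_range _ _).symm

/-- The diagonal of the Christoffel kernel, as a real number. -/
noncomputable def kappa (n : ℕ) (ξ : ℂ) : ℝ :=
  ∑ m ∈ Finset.range (n + 1), Complex.normSq ((φ m).eval ξ)

lemma christoffelK_diag (n : ℕ) (ξ : ℂ) :
    christoffelK φ n ξ ξ = ((kappa φ n ξ : ℝ) : ℂ) := by
  rw [christoffelK, kappa]
  push_cast
  refine Finset.sum_congr rfl fun m _ => ?_
  rw [mul_comm, Complex.mul_conj]

variable {φ}

section DegreeFacts

variable (hdeg : ∀ k, (φ k).degree = (k : ℕ))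
variable (hlead : ∀ k, 0 < ((φ k).leadingCoeff).re ∧ ((φ k).leadingCoeff).im = 0)

include hdeg in
lemma phi_natDegree (k : ℕ) : (φ k).natDegree = k :=
  natDegree_eq_of_degree_eq_some (hdeg k)

include hlead in
lemma phi_leadingCoeff_ne (k : ℕ) : (φ k).leadingCoeff ≠ 0 := by
  intro h
  have := (hlead k).1
  rw [h] at this
  simp at this

include hdeg in
lemma kerPoly_natDegree_le (n : ℕ) (ξ : ℂ) : (kerPoly φ n ξ).natDegree ≤ n := by
  refine natDegree_sum_le_of_forall_le _ _ fun m hm => ?_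
  refine le_trans (natDegree_C_mul_le _ _) ?_
  rw [phi_natDegree hdeg]
  exact Nat.lt_succ_iff.mp (Finset.mem_range.mp hm)

include hdeg hlead in
lemma kappa_pos (n : ℕ) (ξ : ℂ) : 0 < kappa φ n ξ := by
  have h0 : φ 0 = Polynomial.C ((φ 0).coeff 0) := by
    apply (φ 0).eq_C_of_natDegree_le_zero
    rw [phi_natDegree hdeg]
  have hc : (φ 0).coeff 0 ≠ 0 := by
    have : (φ 0).leadingCoeff = (φ 0).coeff 0 := by
      rw [Polynomial.leadingCoeff, phi_natDegree hdeg]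
    intro h
    exact phi_leadingCoeff_ne hlead 0 (by rw [this, h])
  have hpos : 0 < Complex.normSq ((φ 0).eval ξ) := by
    rw [h0]
    simpa using Complex.normSq_pos.mpr hc
  refine lt_of_lt_of_le hpos ?_
  refine Finset.single_le_sum (f := fun m => Complex.normSq ((φ m).eval ξ)) ?_ ?_
  · intro i _; exact Complex.normSq_nonneg _
  · simp

include hdeg hlead in
lemma span_rep : ∀ (n : ℕ) (p : Polynomial ℂ), p.natDegree ≤ n →
    ∃ c : Fin (n + 1) → ℂ, ∑ k : Fin (n + 1), c k • φ (k : ℕ) = p := by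
  intro n
  induction n with
  | zero =>
    intro p hp
    set c0 := (φ 0).coeff 0 with hc0
    have h0 : φ 0 = Polynomial.C c0 := by
      apply (φ 0).eq_C_of_natDegree_le_zero
      rw [phi_natDegree hdeg]
    have hc : c0 ≠ 0 := by
      have hl : (φ 0).leadingCoeff = c0 := by
        rw [Polynomial.leadingCoeff, phi_natDegree hdeg]
      intro h
      exact phi_leadingCoeff_ne hlead 0 (by rw [hl, h])
    refine ⟨fun _ => p.coeff 0 / c0, ?_⟩
    rw [Fin.sum_univ_one]
    have hpC : p = Polynomial.C (p.coeff 0) := p.eq_C_of_natDegree_le_zero hp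
    rw [Fin.val_zero, h0, Polynomial.smul_C, smul_eq_mul, div_mul_cancel₀ _ hc]
    exact hpC.symm
  | succ n ih =>
    intro p hp
    set a := p.coeff (n + 1) / (φ (n + 1)).leadingCoeff with ha
    set q := p - a • φ (n + 1) with hq
    have hnd : (φ (n + 1)).natDegree = n + 1 := phi_natDegree hdeg (n + 1)
    have hqd : q.natDegree ≤ n := by
      rw [Polynomial.natDegree_le_iff_coeff_eq_zero]
      intro N hN
      rw [hq, Polynomial.coeff_sub, Polynomial.coeff_smul, smul_eq_mul]
      rcases eq_or_lt_of_le (Nat.succ_le_of_lt hN) with hE | hL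
      · have hco : (φ (n + 1)).coeff N = (φ (n + 1)).leadingCoeff := by
          rw [Polynomial.leadingCoeff, hnd, ← hE]
        rw [hco, ha, div_mul_cancel₀ _ (phi_leadingCoeff_ne hlead (n + 1)), ← hE, sub_self]
      · have h1 : p.coeff N = 0 := Polynomial.coeff_eq_zero_of_natDegree_lt (lt_of_le_of_lt hp hL)
        have h2 : (φ (n + 1)).coeff N = 0 := Polynomial.coeff_eq_zero_of_natDegree_lt (by omega)
        rw [h1, h2, mul_zero, sub_self]
    obtain ⟨c, hc⟩ := ih q hqd
    refine ⟨Fin.snoc c a, ?_⟩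
    rw [Fin.sum_univ_castSucc]
    have hlast : (Fin.snoc c a : Fin (n + 2) → ℂ) (Fin.last (n + 1)) = a := Fin.snoc_last _ _
    have hrest : ∀ k : Fin (n + 1), (Fin.snoc c a : Fin (n + 2) → ℂ) k.castSucc = c k :=
      fun k => Fin.snoc_castSucc _ _ _
    calc (∑ k : Fin (n + 1), (Fin.snoc c a : Fin (n + 2) → ℂ) k.castSucc • φ (k.castSucc : ℕ))
          + (Fin.snoc c a : Fin (n + 2) → ℂ) (Fin.last (n + 1)) • φ ((Fin.last (n + 1) : Fin (n+2)) : ℕ)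
        = (∑ k : Fin (n + 1), c k • φ (k : ℕ)) + a • φ (n + 1) := by
          rw [hlast]
          congr 1
          refine Finset.sum_congr rfl fun k _ => ?_
          rw [hrest k]
          rfl
      _ = q + a • φ (n + 1) := by rw [hc]
      _ = p := by rw [hq]; ring

end DegreeFacts


section Orth

variable (hμT : μ (Metric.sphere (0 : ℂ) 1)ᶜ = 0)
variable (hdeg : ∀ k, (φ k).degree = (k : ℕ))
variable (hlead : ∀ k, 0 < ((φ k).leadingCoeff).re ∧ ((φ k).leadingCoeff).im = 0)
variable (horth : ∀ k m, ∫ z, (φ k).eval z * conj ((φ m).eval z) ∂μ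
        = if k = m then 1 else 0)

include hμT

lemma integ_pq (p q : Polynomial ℂ) :
    Integrable (fun z => p.eval z * conj (q.eval z)) μ :=
  integC hμT (p.continuous.mul (Complex.continuous_conj.comp q.continuous))

lemma cont_ker (n : ℕ) (ξ : ℂ) : Continuous fun z => christoffelK φ n ξ z := by
  have h : (fun z => (kerPoly φ n ξ).eval z) = fun z => christoffelK φ n ξ z :=
    funext (kerPoly_eval φ n ξ)
  rw [← h]
  exact (kerPoly φ n ξ).continuous

include horth in
lemma int_p_conj_phi {n : ℕ} (p : Polynomial ℂ) (c : Fin (n + 1) → ℂ)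
    (hc : ∑ k : Fin (n + 1), c k • φ (k : ℕ) = p) (m : Fin (n + 1)) :
    ∫ z, p.eval z * conj ((φ (m : ℕ)).eval z) ∂μ = c m := by
  have hpt : ∀ z : ℂ, p.eval z * conj ((φ (m : ℕ)).eval z)
      = ∑ k : Fin (n + 1), c k * ((φ (k : ℕ)).eval z * conj ((φ (m : ℕ)).eval z)) := by
    intro z
    rw [← hc, eval_finset_sum, Finset.sum_mul]
    refine Finset.sum_congr rfl fun k _ => ?_
    rw [Polynomial.eval_smul, smul_eq_mul]
    ring
  calc ∫ z, p.eval z * conj ((φ (m : ℕ)).eval z) ∂μ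
      = ∫ z, ∑ k : Fin (n + 1), c k * ((φ (k : ℕ)).eval z * conj ((φ (m : ℕ)).eval z)) ∂μ :=
        integral_congr_ae (Filter.Eventually.of_forall hpt)
    _ = ∑ k : Fin (n + 1), ∫ z, c k * ((φ (k : ℕ)).eval z * conj ((φ (m : ℕ)).eval z)) ∂μ :=
        integral_finset_sum _ (fun k _ => (integ_pq hμT _ _).const_mul _)
    _ = ∑ k : Fin (n + 1), c k * ∫ z, (φ (k : ℕ)).eval z * conj ((φ (m : ℕ)).eval z) ∂μ := by
        refine Finset.sum_congr rfl fun k _ => integral_const_mul _ _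
    _ = ∑ k : Fin (n + 1), c k * (if (k : ℕ) = (m : ℕ) then 1 else 0) := by
        simp only [horth]
    _ = c m := by
        simp only [Fin.val_eq_val, mul_ite, mul_one, mul_zero]
        simp

include hdeg hlead horth in
lemma reproducing (n : ℕ) (ξ : ℂ) (p : Polynomial ℂ) (hp : p.natDegree ≤ n) :
    ∫ z, p.eval z * conj (christoffelK φ n ξ z) ∂μ = p.eval ξ := by
  obtain ⟨c, hc⟩ := span_rep hdeg hlead n p hp
  have hpt : ∀ z : ℂ, p.eval z * conj (christoffelK φ n ξ z)
      = ∑ m : Fin (n + 1), (φ (m : ℕ)).eval ξ * (p.eval z * conj ((φ (m : ℕ)).eval z)) := by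
    intro z
    rw [christoffelK_fin, map_sum, Finset.mul_sum]
    refine Finset.sum_congr rfl fun m _ => ?_
    rw [map_mul, Complex.conj_conj]
    ring
  calc ∫ z, p.eval z * conj (christoffelK φ n ξ z) ∂μ
      = ∫ z, ∑ m : Fin (n + 1), (φ (m : ℕ)).eval ξ * (p.eval z * conj ((φ (m : ℕ)).eval z)) ∂μ :=
        integral_congr_ae (Filter.Eventually.of_forall hpt)
    _ = ∑ m : Fin (n + 1), ∫ z, (φ (m : ℕ)).eval ξ * (p.eval z * conj ((φ (m : ℕ)).eval z)) ∂μ :=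
        integral_finset_sum _ (fun m _ => (integ_pq hμT _ _).const_mul _)
    _ = ∑ m : Fin (n + 1), (φ (m : ℕ)).eval ξ * ∫ z, p.eval z * conj ((φ (m : ℕ)).eval z) ∂μ :=
        Finset.sum_congr rfl fun m _ => integral_const_mul _ _
    _ = ∑ m : Fin (n + 1), (φ (m : ℕ)).eval ξ * c m :=
        Finset.sum_congr rfl fun m _ => by rw [int_p_conj_phi hμT horth p c hc m]
    _ = p.eval ξ := by
        rw [← hc, eval_finset_sum]
        refine Finset.sum_congr rfl fun m _ => ?_
        rw [Polynomial.eval_smul, smul_eq_mul, mul_comm]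

include hdeg hlead horth in
lemma paraOrtho_int (n : ℕ) (w : ℂ) {k : ℕ} (hk1 : 1 ≤ k) (hkn : k ≤ n) :
    ∫ z, paraOrtho φ n w z * (conj z) ^ k ∂μ = 0 := by
  have e1 : ∫ z, z ^ k * conj (christoffelK φ n w z) ∂μ = w ^ k := by
    have h := reproducing hμT hdeg hlead horth n w (X ^ k)
      (by rw [natDegree_X_pow]; exact hkn)
    simpa using h
  have e2 : ∫ z, z ^ (k - 1) * conj (christoffelK φ n w z) ∂μ = w ^ (k - 1) := by
    have h := reproducing hμT hdeg hlead horth n w (X ^ (k - 1))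
      (by rw [natDegree_X_pow]; omega)
    simpa using h
  have hcont : Continuous fun z : ℂ => christoffelK φ n w z := cont_ker hμT n w
  have int1 : Integrable (fun z : ℂ => conj (z ^ k * conj (christoffelK φ n w z))) μ :=
    integC hμT (Complex.continuous_conj.comp
      ((continuous_id.pow k).mul (Complex.continuous_conj.comp hcont)))
  have int2 : Integrable (fun z : ℂ => conj (z ^ (k - 1) * conj (christoffelK φ n w z))) μ :=
    integC hμT (Complex.continuous_conj.comp
      ((continuous_id.pow (k - 1)).mul (Complex.continuous_conj.comp hcont)))
  have hpt : ∀ z : ℂ, ‖z‖ = 1 → paraOrtho φ n w z * (conj z) ^ k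
      = conj (z ^ k * conj (christoffelK φ n w z))
        - conj w * conj (z ^ (k - 1) * conj (christoffelK φ n w z)) := by
    intro z hz
    have hzk : z * (conj z) ^ k = (conj z) ^ (k - 1) := by
      have hk' : k - 1 + 1 = k := Nat.sub_add_cancel hk1
      have : z * (conj z) ^ k = (conj z) ^ (k - 1) * (z * conj z) := by
        conv_lhs => rw [← hk', pow_succ]
        ring
      rw [this, uc_mul_conj hz, mul_one]
    rw [paraOrtho]
    simp only [map_mul, map_pow, Complex.conj_conj]
    linear_combination (-(conj w) * christoffelK φ n w z) * hzk
  calc ∫ z, paraOrtho φ n w z * (conj z) ^ k ∂μ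
      = ∫ z, (conj (z ^ k * conj (christoffelK φ n w z))
          - conj w * conj (z ^ (k - 1) * conj (christoffelK φ n w z))) ∂μ :=
        integral_congr_ae (by filter_upwards [ae_sphere hμT] with z hz using hpt z hz)
    _ = (∫ z, conj (z ^ k * conj (christoffelK φ n w z)) ∂μ)
        - conj w * ∫ z, conj (z ^ (k - 1) * conj (christoffelK φ n w z)) ∂μ := by
        rw [integral_sub int1 (int2.const_mul _), integral_const_mul]
    _ = conj (∫ z, z ^ k * conj (christoffelK φ n w z) ∂μ)
        - conj w * conj (∫ z, z ^ (k - 1) * conj (christoffelK φ n w z) ∂μ) := by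
        rw [integral_conj, integral_conj]
    _ = conj (w ^ k) - conj w * conj (w ^ (k - 1)) := by rw [e1, e2]
    _ = 0 := by
        rw [map_pow, map_pow, ← pow_succ', Nat.sub_add_cancel hk1, sub_self]

end Orth


/-! ### The reversed-conjugated polynomial -/

/-- `srev m q` is the polynomial `z ↦ z^m * conj (q(z))` on the unit circle. -/
noncomputable def srev (m : ℕ) (q : Polynomial ℂ) : Polynomial ℂ :=
  ∑ k ∈ Finset.range (m + 1), Polynomial.C (conj (q.coeff k)) * X ^ (m - k)

lemma srev_natDegree_le (m : ℕ) (q : Polynomial ℂ) : (srev m q).natDegree ≤ m := by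
  refine natDegree_sum_le_of_forall_le _ _ fun k hk => ?_
  refine le_trans (natDegree_C_mul_le _ _) ?_
  rw [natDegree_X_pow]
  omega

lemma srev_eval (m : ℕ) (q : Polynomial ℂ) (hq : q.natDegree ≤ m) {z : ℂ} (hz : ‖z‖ = 1) :
    (srev m q).eval z = z ^ m * conj (q.eval z) := by
  rw [srev, eval_finset_sum]
  have hqe : q.eval z = ∑ k ∈ Finset.range (m + 1), q.coeff k * z ^ k :=
    eval_eq_sum_range' (Nat.lt_succ_of_le hq) z
  rw [hqe, map_sum, Finset.mul_sum]
  refine Finset.sum_congr rfl fun k hk => ?_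
  rw [eval_mul, eval_C, eval_pow, eval_X, map_mul, map_pow]
  have hk' : k ≤ m := Nat.lt_succ_iff.mp (Finset.mem_range.mp hk)
  rw [uc_pow_sub hz hk']
  ring

section Nodes

variable (hμT : μ (Metric.sphere (0 : ℂ) 1)ᶜ = 0)
variable (hdeg : ∀ k, (φ k).degree = (k : ℕ))
variable (hlead : ∀ k, 0 < ((φ k).leadingCoeff).re ∧ ((φ k).leadingCoeff).im = 0)
variable (horth : ∀ k m, ∫ z, (φ k).eval z * conj ((φ m).eval z) ∂μ
        = if k = m then 1 else 0)
variable {n : ℕ} {w0 : ℂ} {ζf : Fin (n + 1) → ℂ}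
variable (hζ1 : ∀ j, ‖ζf j‖ = 1) (hinj : Function.Injective ζf)
variable (h00 : ∀ j, paraOrtho φ n w0 (ζf j) = 0)

lemma nodal_natDegree : (Lagrange.nodal Finset.univ ζf).natDegree = n + 1 := by
  rw [Lagrange.natDegree_nodal]
  simp

include hinj in
lemma nodal_factor (P : Polynomial ℂ) (hroots : ∀ j, P.eval (ζf j) = 0) :
    P = Lagrange.nodal Finset.univ ζf * (P /ₘ Lagrange.nodal Finset.univ ζf) := by
  have hm : (Lagrange.nodal Finset.univ ζf).Monic := Lagrange.nodal_monic
  have key := Polynomial.modByMonic_add_div P (Lagrange.nodal Finset.univ ζf)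
  have hrem : P %ₘ Lagrange.nodal Finset.univ ζf = 0 := by
    refine Polynomial.eq_zero_of_degree_lt_of_eval_index_eq_zero Finset.univ hinj.injOn ?_ ?_
    · have h1 := Polynomial.degree_modByMonic_lt P hm
      rwa [Lagrange.degree_nodal] at h1
    · intro i _
      have h2 := congrArg (Polynomial.eval (ζf i)) key
      rw [Polynomial.eval_add, Polynomial.eval_mul,
        Lagrange.eval_nodal_at_node (Finset.mem_univ i), zero_mul, add_zero, hroots i] at h2
      exact h2
  rw [hrem, zero_add] at key
  exact key.symm

lemma BPoly_eval (z : ℂ) :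
    ((1 - Polynomial.C (conj w0) * X) * kerPoly φ n w0).eval z = paraOrtho φ n w0 z := by
  rw [eval_mul, eval_sub, eval_one, eval_mul, eval_C, eval_X, kerPoly_eval, paraOrtho]

include hdeg hlead in
lemma BPoly_ne : (1 - Polynomial.C (conj w0) * X) * kerPoly φ n w0 ≠ 0 := by
  apply mul_ne_zero
  · intro h
    have h1 := congrArg (fun p : Polynomial ℂ => p.coeff 0) h
    simp at h1
  · intro h
    have h2 := congrArg (Polynomial.eval w0) h
    rw [kerPoly_eval, christoffelK_diag] at h2
    simp only [Polynomial.eval_zero, Complex.ofReal_eq_zero] at h2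
    exact absurd h2 (ne_of_gt (kappa_pos hdeg hlead n w0))

include hdeg hlead hinj h00 in
lemma nodal_eq_BPoly : ∃ γ : ℂ, γ ≠ 0 ∧
    (1 - Polynomial.C (conj w0) * X) * kerPoly φ n w0
      = Polynomial.C γ * Lagrange.nodal Finset.univ ζf := by
  set BP := (1 - Polynomial.C (conj w0) * X) * kerPoly φ n w0 with hBPdef
  have hfact := nodal_factor hinj BP (fun j => by rw [hBPdef, BPoly_eval]; exact h00 j)
  set S := BP /ₘ Lagrange.nodal Finset.univ ζf with hSdef
  have hBne : BP ≠ 0 := BPoly_ne hdeg hlead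
  have hSne : S ≠ 0 := fun h => hBne (by rw [hfact, h, mul_zero])
  have hBd : BP.natDegree ≤ n + 1 := by
    refine le_trans natDegree_mul_le ?_
    have h1 : (1 - Polynomial.C (conj w0) * X).natDegree ≤ 1 := by
      refine le_trans (natDegree_sub_le _ _) (max_le (by simp) ?_)
      refine le_trans (natDegree_C_mul_le _ _) (by simp)
    have h2 := kerPoly_natDegree_le hdeg n w0
    omega
  have hdeg1 : BP.natDegree = (n + 1) + S.natDegree := by
    rw [hfact, Polynomial.natDegree_mul (Lagrange.nodal_ne_zero) hSne, nodal_natDegree]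
  have hS0 : S.natDegree = 0 := by omega
  have hSC : S = Polynomial.C (S.coeff 0) := S.eq_C_of_natDegree_le_zero hS0.le
  refine ⟨S.coeff 0, fun h => hSne (by rw [hSC, h, map_zero]), ?_⟩
  calc BP = Lagrange.nodal Finset.univ ζf * S := hfact
    _ = Lagrange.nodal Finset.univ ζf * Polynomial.C (S.coeff 0) := by rw [← hSC]
    _ = Polynomial.C (S.coeff 0) * Lagrange.nodal Finset.univ ζf := mul_comm _ _

include hμT hdeg hlead horth hζ1 hinj h00 in
lemma vanish_int (P : Polynomial ℂ) (hP2 : P.natDegree ≤ 2 * n)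
    (hroots : ∀ j, P.eval (ζf j) = 0) :
    ∫ z, P.eval z * (conj z) ^ n ∂μ = 0 := by
  by_cases hP : P = 0
  · simp [hP]
  obtain ⟨γ, hγ, hBPn⟩ := nodal_eq_BPoly hdeg hlead hinj h00
  have hfact := nodal_factor hinj P hroots
  set S := P /ₘ Lagrange.nodal Finset.univ ζf with hSdef
  have hSne : S ≠ 0 := fun h => hP (by rw [hfact, h, mul_zero])
  have hdS : S.natDegree < n := by
    have h1 : P.natDegree = (n + 1) + S.natDegree := by
      rw [hfact, Polynomial.natDegree_mul (Lagrange.nodal_ne_zero) hSne, nodal_natDegree]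
    omega
  have hcontP : Continuous fun z : ℂ => paraOrtho φ n w0 z := by
    have h : (fun z => ((1 - Polynomial.C (conj w0) * X) * kerPoly φ n w0).eval z)
        = fun z => paraOrtho φ n w0 z := funext fun z => BPoly_eval z
    rw [← h]
    exact Polynomial.continuous _
  have hptw : ∀ z : ℂ, ‖z‖ = 1 → P.eval z * (conj z) ^ n
      = ∑ k ∈ Finset.range n, S.coeff k * (γ⁻¹ * (paraOrtho φ n w0 z * (conj z) ^ (n - k))) := by
    intro z hz
    have hnodal : (Lagrange.nodal Finset.univ ζf).eval z = γ⁻¹ * paraOrtho φ n w0 z := by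
      have h2 := congrArg (Polynomial.eval z) hBPn
      rw [BPoly_eval, eval_mul, eval_C] at h2
      rw [h2, inv_mul_cancel_left₀ hγ]
    have hSe : S.eval z = ∑ k ∈ Finset.range n, S.coeff k * z ^ k := eval_eq_sum_range' hdS z
    calc P.eval z * (conj z) ^ n
        = (Lagrange.nodal Finset.univ ζf).eval z * S.eval z * (conj z) ^ n := by
          rw [hfact, eval_mul]
      _ = γ⁻¹ * paraOrtho φ n w0 z * (∑ k ∈ Finset.range n, S.coeff k * z ^ k) * (conj z) ^ n := by
          rw [hnodal, hSe]
      _ = ∑ k ∈ Finset.range n, γ⁻¹ * paraOrtho φ n w0 z * (S.coeff k * z ^ k) * (conj z) ^ n := by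
          rw [Finset.mul_sum, Finset.sum_mul]
      _ = ∑ k ∈ Finset.range n, S.coeff k * (γ⁻¹ * (paraOrtho φ n w0 z * (conj z) ^ (n - k))) := by
          refine Finset.sum_congr rfl fun k hk => ?_
          have hkn : k < n := Finset.mem_range.mp hk
          have hzk : z ^ k * (conj z) ^ n = (conj z) ^ (n - k) := by
            rw [uc_conj_pow_sub hz (le_of_lt hkn)]
            ring
          linear_combination (S.coeff k * γ⁻¹ * paraOrtho φ n w0 z) * hzk
  calc ∫ z, P.eval z * (conj z) ^ n ∂μ
      = ∫ z, ∑ k ∈ Finset.range n,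
          S.coeff k * (γ⁻¹ * (paraOrtho φ n w0 z * (conj z) ^ (n - k))) ∂μ :=
        integral_congr_ae (by filter_upwards [ae_sphere hμT] with z hz using hptw z hz)
    _ = ∑ k ∈ Finset.range n, ∫ z,
          S.coeff k * (γ⁻¹ * (paraOrtho φ n w0 z * (conj z) ^ (n - k))) ∂μ := by
        refine integral_finset_sum _ fun k _ => ?_
        exact (((integC hμT (hcontP.mul (Complex.continuous_conj.pow _))).const_mul
          γ⁻¹).const_mul _)
    _ = ∑ k ∈ Finset.range n,
          S.coeff k * (γ⁻¹ * ∫ z, paraOrtho φ n w0 z * (conj z) ^ (n - k) ∂μ) := by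
        refine Finset.sum_congr rfl fun k _ => ?_
        rw [integral_const_mul, integral_const_mul]
    _ = 0 := by
        refine Finset.sum_eq_zero fun k hk => ?_
        have hkn : k < n := Finset.mem_range.mp hk
        rw [paraOrtho_int hμT hdeg hlead horth n w0 (by omega) (by omega)]
        ring

include hμT hdeg hlead horth hζ1 hinj h00 in
lemma base_identity (G : Polynomial ℂ) (hG : G.natDegree ≤ 2 * n) :
    ∫ z, G.eval z * (conj z) ^ n ∂μ
      = ∑ j : Fin (n + 1), G.eval (ζf j)
          * ∫ z, (Lagrange.basis Finset.univ ζf j).eval z * (conj z) ^ n ∂μ := by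
  set H := Lagrange.interpolate Finset.univ ζf (fun j => G.eval (ζf j)) with hH
  have hHd : H.natDegree ≤ n := by
    apply natDegree_le_iff_degree_le.mpr
    refine le_trans (Lagrange.degree_interpolate_le _ hinj.injOn) ?_
    simp
  have hsub : (G - H).natDegree ≤ 2 * n :=
    le_trans (natDegree_sub_le _ _) (max_le hG (le_trans hHd (by omega)))
  have hroots : ∀ j, (G - H).eval (ζf j) = 0 := fun j => by
    rw [Polynomial.eval_sub, hH,
      Lagrange.eval_interpolate_at_node _ hinj.injOn (Finset.mem_univ j), sub_self]
  have hvan := vanish_int hμT hdeg hlead horth hζ1 hinj h00 (G - H) hsub hroots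
  have intG : Integrable (fun z => G.eval z * (conj z) ^ n) μ :=
    integC hμT (G.continuous.mul (Complex.continuous_conj.pow n))
  have intH : Integrable (fun z => H.eval z * (conj z) ^ n) μ :=
    integC hμT (H.continuous.mul (Complex.continuous_conj.pow n))
  have hsplit : ∫ z, (G - H).eval z * (conj z) ^ n ∂μ
      = (∫ z, G.eval z * (conj z) ^ n ∂μ) - ∫ z, H.eval z * (conj z) ^ n ∂μ := by
    calc ∫ z, (G - H).eval z * (conj z) ^ n ∂μ
        = ∫ z, (G.eval z * (conj z) ^ n - H.eval z * (conj z) ^ n) ∂μ :=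
          integral_congr_ae (Filter.Eventually.of_forall fun z => by
            simp only [Polynomial.eval_sub]; ring)
      _ = _ := integral_sub intG intH
  have hGH : ∫ z, G.eval z * (conj z) ^ n ∂μ = ∫ z, H.eval z * (conj z) ^ n ∂μ := by
    rw [hsplit] at hvan
    exact sub_eq_zero.mp hvan
  rw [hGH]
  have hHe : ∀ z : ℂ, H.eval z
      = ∑ j : Fin (n + 1), G.eval (ζf j) * (Lagrange.basis Finset.univ ζf j).eval z := by
    intro z
    rw [hH, Lagrange.interpolate_apply, eval_finset_sum]
    exact Finset.sum_congr rfl fun j _ => by rw [eval_mul, eval_C]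
  calc ∫ z, H.eval z * (conj z) ^ n ∂μ
      = ∫ z, ∑ j : Fin (n + 1),
          G.eval (ζf j) * ((Lagrange.basis Finset.univ ζf j).eval z * (conj z) ^ n) ∂μ := by
        refine integral_congr_ae (Filter.Eventually.of_forall fun z => ?_)
        simp only [hHe, Finset.sum_mul]
        exact Finset.sum_congr rfl fun j _ => by ring
    _ = ∑ j : Fin (n + 1), ∫ z,
          G.eval (ζf j) * ((Lagrange.basis Finset.univ ζf j).eval z * (conj z) ^ n) ∂μ := by
        refine integral_finset_sum _ fun j _ => ?_
        exact (integC hμT ((Lagrange.basis Finset.univ ζf j).continuous.mul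
          (Complex.continuous_conj.pow n))).const_mul _
    _ = ∑ j : Fin (n + 1), G.eval (ζf j)
          * ∫ z, (Lagrange.basis Finset.univ ζf j).eval z * (conj z) ^ n ∂μ :=
        Finset.sum_congr rfl fun j _ => integral_const_mul _ _

include hμT horth in
lemma parseval (ξ : ℂ) :
    ∫ z, (kerPoly φ n ξ).eval z * conj ((kerPoly φ n ξ).eval z) ∂μ
      = ((kappa φ n ξ : ℝ) : ℂ) := by
  have hpt : ∀ z : ℂ, (kerPoly φ n ξ).eval z * conj ((kerPoly φ n ξ).eval z)
      = ∑ m : Fin (n + 1), ∑ l : Fin (n + 1),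
          (conj ((φ (m : ℕ)).eval ξ) * (φ (l : ℕ)).eval ξ)
            * ((φ (m : ℕ)).eval z * conj ((φ (l : ℕ)).eval z)) := by
    intro z
    rw [kerPoly_eval, christoffelK_fin, map_sum, Finset.sum_mul_sum]
    refine Finset.sum_congr rfl fun m _ => Finset.sum_congr rfl fun l _ => ?_
    rw [map_mul, Complex.conj_conj]
    ring
  calc ∫ z, (kerPoly φ n ξ).eval z * conj ((kerPoly φ n ξ).eval z) ∂μ
      = ∫ z, ∑ m : Fin (n + 1), ∑ l : Fin (n + 1),
          (conj ((φ (m : ℕ)).eval ξ) * (φ (l : ℕ)).eval ξ)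
            * ((φ (m : ℕ)).eval z * conj ((φ (l : ℕ)).eval z)) ∂μ :=
        integral_congr_ae (Filter.Eventually.of_forall hpt)
    _ = ∑ m : Fin (n + 1), ∑ l : Fin (n + 1),
          (conj ((φ (m : ℕ)).eval ξ) * (φ (l : ℕ)).eval ξ)
            * ∫ z, (φ (m : ℕ)).eval z * conj ((φ (l : ℕ)).eval z) ∂μ := by
        rw [integral_finset_sum _ fun m _ =>
          integrable_finset_sum _ fun l _ => (integ_pq hμT _ _).const_mul _]
        refine Finset.sum_congr rfl fun m _ => ?_
        rw [integral_finset_sum _ fun l _ => (integ_pq hμT _ _).const_mul _]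
        exact Finset.sum_congr rfl fun l _ => integral_const_mul _ _
    _ = ∑ m : Fin (n + 1), conj ((φ (m : ℕ)).eval ξ) * (φ (m : ℕ)).eval ξ := by
        refine Finset.sum_congr rfl fun m _ => ?_
        rw [Finset.sum_eq_single m]
        · rw [horth, if_pos rfl, mul_one]
        · intro l _ hlm
          rw [horth, if_neg (fun h => hlm (Fin.ext h).symm), mul_zero]
        · intro h
          exact absurd (Finset.mem_univ m) h
    _ = ((kappa φ n ξ : ℝ) : ℂ) := by
        have h5 : ∀ a : ℂ, conj a * a = ((Complex.normSq a : ℝ) : ℂ) := fun a => by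
          rw [mul_comm, Complex.mul_conj]
        simp_rw [h5]
        rw [kappa]
        push_cast
        exact Fin.sum_univ_eq_sum_range
          (fun i => ((Complex.normSq ((φ i).eval ξ) : ℝ) : ℂ)) (n + 1)

lemma int_self_real (q : Polynomial ℂ) :
    ∫ z, q.eval z * conj (q.eval z) ∂μ
      = ((∫ z, Complex.normSq (q.eval z) ∂μ : ℝ) : ℂ) := by
  exact (integral_congr_ae (Filter.Eventually.of_forall fun z =>
    Complex.mul_conj (q.eval z))).trans integral_ofReal

include hinj in
lemma ell_natDegree (j : Fin (n + 1)) :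
    (Lagrange.basis Finset.univ ζf j).natDegree = n := by
  rw [Lagrange.natDegree_basis hinj.injOn (Finset.mem_univ j)]
  simp

include hμT hdeg hlead horth hζ1 hinj h00 in
lemma v_eq (j : Fin (n + 1)) :
    (ζf j) ^ n * ∫ z, (Lagrange.basis Finset.univ ζf j).eval z * (conj z) ^ n ∂μ
      = ((∫ z, Complex.normSq ((Lagrange.basis Finset.univ ζf j).eval z) ∂μ : ℝ) : ℂ) := by
  set L := Lagrange.basis Finset.univ ζf j with hL
  have hdL : L.natDegree = n := ell_natDegree hinj j
  have hG : (L * srev n L).natDegree ≤ 2 * n := by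
    refine le_trans natDegree_mul_le ?_
    have := srev_natDegree_le n L
    omega
  have hb := base_identity hμT hdeg hlead horth hζ1 hinj h00 (L * srev n L) hG
  have h1 : ∫ z, (L * srev n L).eval z * (conj z) ^ n ∂μ
      = ∫ z, L.eval z * conj (L.eval z) ∂μ := by
    refine integral_congr_ae ?_
    filter_upwards [ae_sphere hμT] with z hz
    rw [eval_mul, srev_eval n L hdL.le hz]
    have h2 := uc_pow_mul_conj_pow hz n
    linear_combination (L.eval z * conj (L.eval z)) * h2
  have h2 : ∀ i : Fin (n + 1), (L * srev n L).eval (ζf i)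
      = if i = j then (ζf j) ^ n else 0 := by
    intro i
    rw [eval_mul, srev_eval n L hdL.le (hζ1 i)]
    by_cases hij : i = j
    · subst hij
      rw [hL, Lagrange.eval_basis_self hinj.injOn (Finset.mem_univ i)]
      simp
    · rw [hL, Lagrange.eval_basis_of_ne (fun h => hij h.symm) (Finset.mem_univ i)]
      simp [hij]
  have h3 : ∑ i : Fin (n + 1), (L * srev n L).eval (ζf i)
        * ∫ z, (Lagrange.basis Finset.univ ζf i).eval z * (conj z) ^ n ∂μ
      = (ζf j) ^ n * ∫ z, (Lagrange.basis Finset.univ ζf j).eval z * (conj z) ^ n ∂μ := by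
    rw [Finset.sum_eq_single j]
    · rw [h2 j, if_pos rfl]
    · intro i _ hij
      rw [h2 i, if_neg hij, zero_mul]
    · intro h
      exact absurd (Finset.mem_univ j) h
  rw [← h3, ← hb, h1, int_self_real]

include hμT hdeg hlead horth hζ1 hinj h00 in
lemma kap_sum (j : Fin (n + 1)) :
    ((kappa φ n (ζf j) : ℝ) : ℂ)
      = ∑ i : Fin (n + 1), ((Complex.normSq (christoffelK φ n (ζf j) (ζf i)) : ℝ) : ℂ)
          * ((ζf i) ^ n
              * ∫ z, (Lagrange.basis Finset.univ ζf i).eval z * (conj z) ^ n ∂μ) := by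
  set Kp := kerPoly φ n (ζf j) with hKp
  have hdK : Kp.natDegree ≤ n := kerPoly_natDegree_le hdeg n _
  have hG : (Kp * srev n Kp).natDegree ≤ 2 * n := by
    refine le_trans natDegree_mul_le ?_
    have := srev_natDegree_le n Kp
    omega
  have hb := base_identity hμT hdeg hlead horth hζ1 hinj h00 (Kp * srev n Kp) hG
  have h1 : ∫ z, (Kp * srev n Kp).eval z * (conj z) ^ n ∂μ
      = ∫ z, Kp.eval z * conj (Kp.eval z) ∂μ := by
    refine integral_congr_ae ?_
    filter_upwards [ae_sphere hμT] with z hz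
    rw [eval_mul, srev_eval n Kp hdK hz]
    have h2 := uc_pow_mul_conj_pow hz n
    linear_combination (Kp.eval z * conj (Kp.eval z)) * h2
  have h2 : ∀ i : Fin (n + 1), (Kp * srev n Kp).eval (ζf i)
      = ((Complex.normSq (christoffelK φ n (ζf j) (ζf i)) : ℝ) : ℂ) * (ζf i) ^ n := by
    intro i
    rw [eval_mul, srev_eval n Kp hdK (hζ1 i), hKp, kerPoly_eval]
    have h4 := Complex.mul_conj (christoffelK φ n (ζf j) (ζf i))
    linear_combination (ζf i) ^ n * h4
  calc ((kappa φ n (ζf j) : ℝ) : ℂ)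
      = ∫ z, Kp.eval z * conj (Kp.eval z) ∂μ := (parseval hμT horth _).symm
    _ = ∫ z, (Kp * srev n Kp).eval z * (conj z) ^ n ∂μ := h1.symm
    _ = ∑ i : Fin (n + 1), (Kp * srev n Kp).eval (ζf i)
          * ∫ z, (Lagrange.basis Finset.univ ζf i).eval z * (conj z) ^ n ∂μ := hb
    _ = _ := by
        refine Finset.sum_congr rfl fun i _ => ?_
        rw [h2 i, mul_assoc]

include hμT hdeg hlead horth hζ1 hinj h00 in
lemma V_val (j : Fin (n + 1)) :
    ∫ z, Complex.normSq ((Lagrange.basis Finset.univ ζf j).eval z) ∂μ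
      = (kappa φ n (ζf j))⁻¹ := by
  classical
  set V : Fin (n + 1) → ℝ :=
    fun i => ∫ z, Complex.normSq ((Lagrange.basis Finset.univ ζf i).eval z) ∂μ with hV
  have hVnn : ∀ i, 0 ≤ V i := fun i => integral_nonneg fun z => Complex.normSq_nonneg _
  have hκ := kappa_pos hdeg hlead n (ζf j)
  have hreal : kappa φ n (ζf j)
      = ∑ i : Fin (n + 1), Complex.normSq (christoffelK φ n (ζf j) (ζf i)) * V i := by
    have h6 := kap_sum hμT hdeg hlead horth hζ1 hinj h00 j
    have h4 : ∀ i : Fin (n + 1), ((Complex.normSq (christoffelK φ n (ζf j) (ζf i)) : ℝ) : ℂ)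
        * ((ζf i) ^ n * ∫ z, (Lagrange.basis Finset.univ ζf i).eval z * (conj z) ^ n ∂μ)
        = ((Complex.normSq (christoffelK φ n (ζf j) (ζf i)) * V i : ℝ) : ℂ) := fun i => by
      rw [v_eq hμT hdeg hlead horth hζ1 hinj h00 i]
      push_cast
      ring
    rw [Finset.sum_congr rfl (fun i _ => h4 i), ← Complex.ofReal_sum] at h6
    exact_mod_cast h6
  have hup : Complex.normSq (christoffelK φ n (ζf j) (ζf j)) * V j ≤ kappa φ n (ζf j) := by
    rw [hreal]
    exact Finset.single_le_sum
      (f := fun i => Complex.normSq (christoffelK φ n (ζf j) (ζf i)) * V i)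
      (fun i _ => mul_nonneg (Complex.normSq_nonneg _) (hVnn i)) (Finset.mem_univ j)
  have hKjj : Complex.normSq (christoffelK φ n (ζf j) (ζf j))
      = kappa φ n (ζf j) * kappa φ n (ζf j) := by
    rw [christoffelK_diag, Complex.normSq_ofReal]
  -- lower bound via the variational argument
  have hrep1 : ∫ z, (Lagrange.basis Finset.univ ζf j).eval z
      * conj ((kerPoly φ n (ζf j)).eval z) ∂μ = 1 := by
    have hfun : (fun z => (Lagrange.basis Finset.univ ζf j).eval z
        * conj ((kerPoly φ n (ζf j)).eval z))
        = fun z => (Lagrange.basis Finset.univ ζf j).eval z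
          * conj (christoffelK φ n (ζf j) z) := funext fun z => by rw [kerPoly_eval]
    rw [hfun]
    have h := reproducing hμT hdeg hlead horth n (ζf j) (Lagrange.basis Finset.univ ζf j)
      (ell_natDegree hinj j).le
    rwa [Lagrange.eval_basis_self hinj.injOn (Finset.mem_univ j)] at h
  have hrep2 : ∫ z, (kerPoly φ n (ζf j)).eval z
      * conj ((Lagrange.basis Finset.univ ζf j).eval z) ∂μ = 1 := by
    have hfun : (fun z => (kerPoly φ n (ζf j)).eval z
        * conj ((Lagrange.basis Finset.univ ζf j).eval z))
        = fun z => conj ((Lagrange.basis Finset.univ ζf j).eval z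
          * conj ((kerPoly φ n (ζf j)).eval z)) := funext fun z => by
      rw [map_mul, Complex.conj_conj]
      ring
    rw [hfun, integral_conj, hrep1, map_one]
  set t := (kappa φ n (ζf j))⁻¹ with ht
  have htκ : t * kappa φ n (ζf j) = 1 := inv_mul_cancel₀ hκ.ne'
  set D := Lagrange.basis Finset.univ ζf j
    - Polynomial.C ((t : ℝ) : ℂ) * kerPoly φ n (ζf j) with hD
  have i1 : Integrable (fun z => (Lagrange.basis Finset.univ ζf j).eval z
      * conj ((Lagrange.basis Finset.univ ζf j).eval z)) μ := integ_pq hμT _ _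
  have i2 : Integrable (fun z => (Lagrange.basis Finset.univ ζf j).eval z
      * conj ((kerPoly φ n (ζf j)).eval z)) μ := integ_pq hμT _ _
  have i3 : Integrable (fun z => (kerPoly φ n (ζf j)).eval z
      * conj ((Lagrange.basis Finset.univ ζf j).eval z)) μ := integ_pq hμT _ _
  have i4 : Integrable (fun z => (kerPoly φ n (ζf j)).eval z
      * conj ((kerPoly φ n (ζf j)).eval z)) μ := integ_pq hμT _ _
  have hexp : ∫ z, D.eval z * conj (D.eval z) ∂μ = ((V j : ℝ) : ℂ) - ((t : ℝ) : ℂ) := by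
    have hpt : ∀ z : ℂ, D.eval z * conj (D.eval z)
        = ((Lagrange.basis Finset.univ ζf j).eval z
              * conj ((Lagrange.basis Finset.univ ζf j).eval z)
            - ((t : ℝ) : ℂ) * ((Lagrange.basis Finset.univ ζf j).eval z
              * conj ((kerPoly φ n (ζf j)).eval z)))
          - (((t : ℝ) : ℂ) * ((kerPoly φ n (ζf j)).eval z
              * conj ((Lagrange.basis Finset.univ ζf j).eval z))
            - (((t : ℝ) : ℂ) * ((t : ℝ) : ℂ)) * ((kerPoly φ n (ζf j)).eval z
              * conj ((kerPoly φ n (ζf j)).eval z))) := by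
      intro z
      rw [hD, Polynomial.eval_sub, eval_mul, eval_C, map_sub, map_mul, Complex.conj_ofReal]
      ring
    have iA : Integrable (fun z => (Lagrange.basis Finset.univ ζf j).eval z
        * conj ((Lagrange.basis Finset.univ ζf j).eval z)
        - ((t : ℝ) : ℂ) * ((Lagrange.basis Finset.univ ζf j).eval z
            * conj ((kerPoly φ n (ζf j)).eval z))) μ := i1.sub (i2.const_mul _)
    have iB : Integrable (fun z => ((t : ℝ) : ℂ) * ((kerPoly φ n (ζf j)).eval z
        * conj ((Lagrange.basis Finset.univ ζf j).eval z))
        - (((t : ℝ) : ℂ) * ((t : ℝ) : ℂ)) * ((kerPoly φ n (ζf j)).eval z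
            * conj ((kerPoly φ n (ζf j)).eval z))) μ :=
      (i3.const_mul _).sub (i4.const_mul _)
    have i2' : Integrable (fun z => ((t : ℝ) : ℂ)
        * ((Lagrange.basis Finset.univ ζf j).eval z
            * conj ((kerPoly φ n (ζf j)).eval z))) μ := i2.const_mul _
    have i3' : Integrable (fun z => ((t : ℝ) : ℂ) * ((kerPoly φ n (ζf j)).eval z
        * conj ((Lagrange.basis Finset.univ ζf j).eval z))) μ := i3.const_mul _
    have i4' : Integrable (fun z => (((t : ℝ) : ℂ) * ((t : ℝ) : ℂ))
        * ((kerPoly φ n (ζf j)).eval z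
            * conj ((kerPoly φ n (ζf j)).eval z))) μ := i4.const_mul _
    rw [integral_congr_ae (Filter.Eventually.of_forall hpt), integral_sub iA iB,
      integral_sub i1 i2', integral_sub i3' i4',
      integral_const_mul, integral_const_mul, integral_const_mul,
      int_self_real, hrep1, hrep2, parseval hμT horth]
    have h6 : ((t : ℝ) : ℂ) * ((kappa φ n (ζf j) : ℝ) : ℂ) = 1 := by exact_mod_cast htκ
    linear_combination ((t : ℝ) : ℂ) * h6
  have hDnn : 0 ≤ V j - t := by
    have h7 := int_self_real (μ := μ) D
    have h8 : ((∫ z, Complex.normSq (D.eval z) ∂μ : ℝ) : ℂ) = ((V j - t : ℝ) : ℂ) := by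
      rw [← h7, hexp]
      push_cast
      ring
    have h9 : ∫ z, Complex.normSq (D.eval z) ∂μ = V j - t := by exact_mod_cast h8
    rw [← h9]
    exact integral_nonneg fun z => Complex.normSq_nonneg _
  have hle : V j ≤ t := by
    rw [hKjj] at hup
    rw [ht, ← one_div, le_div_iff₀ hκ]
    nlinarith
  linarith

include hμT hdeg hlead horth hζ1 hinj h00 in
lemma wgt_val (j : Fin (n + 1)) :
    ∫ z, (Lagrange.basis Finset.univ ζf j).eval z * (conj z) ^ n ∂μ
      = (conj (ζf j)) ^ n * (((kappa φ n (ζf j))⁻¹ : ℝ) : ℂ) := by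
  have h1 := v_eq hμT hdeg hlead horth hζ1 hinj h00 j
  rw [V_val hμT hdeg hlead horth hζ1 hinj h00 j] at h1
  calc ∫ z, (Lagrange.basis Finset.univ ζf j).eval z * (conj z) ^ n ∂μ
      = ((ζf j) ^ n * (conj (ζf j)) ^ n)
          * ∫ z, (Lagrange.basis Finset.univ ζf j).eval z * (conj z) ^ n ∂μ := by
        rw [uc_pow_mul_conj_pow (hζ1 j) n, one_mul]
    _ = (conj (ζf j)) ^ n
          * ((ζf j) ^ n * ∫ z, (Lagrange.basis Finset.univ ζf j).eval z * (conj z) ^ n ∂μ) := by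
        ring
    _ = (conj (ζf j)) ^ n * (((kappa φ n (ζf j))⁻¹ : ℝ) : ℂ) := by rw [h1]

include hμT hdeg hlead horth hζ1 hinj h00 in
lemma master (N : ℕ) (hN : N ≤ n) (p : Polynomial ℂ) (hp : p.natDegree ≤ 2 * N) :
    ∫ z, p.eval z * (conj z) ^ N ∂μ
      = ∑ j : Fin (n + 1), (((kappa φ n (ζf j))⁻¹ : ℝ) : ℂ)
          * (p.eval (ζf j) * (conj (ζf j)) ^ N) := by
  have hG : (X ^ (n - N) * p).natDegree ≤ 2 * n := by
    refine le_trans natDegree_mul_le ?_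
    rw [natDegree_X_pow]
    omega
  have hb := base_identity hμT hdeg hlead horth hζ1 hinj h00 (X ^ (n - N) * p) hG
  have key : ∀ z : ℂ, ‖z‖ = 1 → z ^ (n - N) * (conj z) ^ n = (conj z) ^ N := by
    intro z hz
    have e : (conj z) ^ n = (conj z) ^ (n - N) * (conj z) ^ N := by
      rw [← pow_add, Nat.sub_add_cancel hN]
    rw [e, ← mul_assoc, uc_pow_mul_conj_pow hz (n - N), one_mul]
  have h1 : ∫ z, (X ^ (n - N) * p).eval z * (conj z) ^ n ∂μ
      = ∫ z, p.eval z * (conj z) ^ N ∂μ := by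
    refine integral_congr_ae ?_
    filter_upwards [ae_sphere hμT] with z hz
    rw [eval_mul, eval_pow, eval_X]
    linear_combination p.eval z * key z hz
  rw [← h1, hb]
  refine Finset.sum_congr rfl fun j _ => ?_
  rw [eval_mul, eval_pow, eval_X, wgt_val hμT hdeg hlead horth hζ1 hinj h00 j]
  linear_combination (p.eval (ζf j) * (((kappa φ n (ζf j))⁻¹ : ℝ) : ℂ)) * key (ζf j) (hζ1 j)

end Nodes

/-! ### The star subalgebra of circle-Laurent functions -/

/-- Continuous functions on the circle of the form `z ↦ p(z)/z^N` with `deg p ≤ 2N`. -/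
noncomputable def circAlg : StarSubalgebra ℂ C(Metric.sphere (0 : ℂ) 1, ℂ) where
  carrier := {g | ∃ (N : ℕ) (p : Polynomial ℂ), p.natDegree ≤ 2 * N ∧
    ∀ z : Metric.sphere (0 : ℂ) 1, g z * (z : ℂ) ^ N = p.eval (z : ℂ)}
  mul_mem' := by
    rintro g h ⟨N, p, hp, hgp⟩ ⟨M, q, hq, hhq⟩
    refine ⟨N + M, p * q, le_trans natDegree_mul_le (by omega), fun z => ?_⟩
    have h1 := hgp z
    have h2 := hhq z
    rw [ContinuousMap.mul_apply, eval_mul, ← h1, ← h2]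
    ring
  one_mem' := ⟨0, 1, by simp, fun z => by simp⟩
  add_mem' := by
    rintro g h ⟨N, p, hp, hgp⟩ ⟨M, q, hq, hhq⟩
    refine ⟨N + M, p * X ^ M + q * X ^ N, ?_, fun z => ?_⟩
    · refine le_trans (natDegree_add_le _ _) (max_le ?_ ?_) <;>
        refine le_trans natDegree_mul_le ?_ <;> rw [natDegree_X_pow] <;> omega
    · have h1 := hgp z
      have h2 := hhq z
      rw [ContinuousMap.add_apply]
      simp only [Polynomial.eval_add, eval_mul, eval_pow, eval_X]
      rw [← h1, ← h2]
      ring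
  algebraMap_mem' := by
    intro r
    refine ⟨0, Polynomial.C r, by simp, fun z => by simp⟩
  star_mem' := by
    rintro g ⟨N, p, hp, hgp⟩
    refine ⟨N, srev (2 * N) p, srev_natDegree_le _ _, fun z => ?_⟩
    have hz : ‖(z : ℂ)‖ = 1 := by simpa using mem_sphere_zero_iff_norm.mp z.2
    have h1 := srev_eval (2 * N) p hp hz
    have h2 := congrArg conj (hgp z)
    rw [map_mul, map_pow] at h2
    have h3 := uc_pow_mul_conj_pow hz N
    rw [ContinuousMap.star_apply, RCLike.star_def, h1, ← h2]
    linear_combination (-(conj (g z) * (z : ℂ) ^ N)) * h3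

lemma circAlg_separates : (circAlg.toSubalgebra).SeparatesPoints := by
  intro x y hxy
  refine ⟨_, ⟨(⟨fun z => (z : ℂ), continuous_subtype_val⟩ :
    C(Metric.sphere (0 : ℂ) 1, ℂ)), ?_, rfl⟩, ?_⟩
  · refine ⟨1, X ^ 2, by simp, fun z => ?_⟩
    simp only [ContinuousMap.coe_mk, eval_pow, eval_X]
    ring
  · exact fun h => hxy (Subtype.ext h)

end SzegoQuad

theorem szego_quadrature_convergence
    (μ : Measure ℂ) [IsFiniteMeasure μ]
    (hμT : μ (Metric.sphere (0 : ℂ) 1)ᶜ = 0)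
    (hlog : ¬ Integrable (fun z => Real.log ((μ.rnDeriv circleLeb z).toReal)) circleLeb)
    (φ : ℕ → Polynomial ℂ)
    (hdeg : ∀ k, (φ k).degree = (k : ℕ))
    (hlead : ∀ k, 0 < ((φ k).leadingCoeff).re ∧ ((φ k).leadingCoeff).im = 0)
    (horth : ∀ k m, ∫ z, (φ k).eval z * conj ((φ m).eval z) ∂μ
        = if k = m then 1 else 0)
    (w : ℕ → ℂ) (hw : ∀ n, w n ∈ Metric.sphere (0 : ℂ) 1)
    (ζ : (n : ℕ) → Fin (n + 1) → ℂ)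
    (hζT : ∀ n j, ζ n j ∈ Metric.sphere (0 : ℂ) 1)
    (hζinj : ∀ n, Function.Injective (ζ n))
    (hζ0 : ∀ n j, paraOrtho φ n (w n) (ζ n j) = 0)
    (f : ℂ → ℂ) (hf : ContinuousOn f (Metric.sphere (0 : ℂ) 1)) :
    Tendsto (fun n => ∑ j : Fin (n + 1), f (ζ n j) / christoffelK φ n (ζ n j) (ζ n j))
      atTop (𝓝 (∫ z, f z ∂μ)) := by
  classical
  have hζ1 : ∀ n j, ‖ζ n j‖ = 1 := fun n j => by
    simpa using mem_sphere_zero_iff_norm.mp (hζT n j)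
  have haem : ∀ᵐ z ∂μ, z ∈ Metric.sphere (0 : ℂ) 1 := by
    have he : {z : ℂ | ¬ z ∈ Metric.sphere (0 : ℂ) 1} = (Metric.sphere (0 : ℂ) 1)ᶜ := rfl
    rw [ae_iff, he]
    exact hμT
  have hrestrict : μ.restrict (Metric.sphere (0 : ℂ) 1) = μ :=
    Measure.restrict_eq_self_of_ae_mem haem
  have hmeas : AEStronglyMeasurable f μ := by
    rw [← hrestrict]
    exact hf.aestronglyMeasurable Metric.isClosed_sphere.measurableSet
  obtain ⟨Cf, hCf⟩ := (isCompact_sphere (0 : ℂ) 1).exists_bound_of_continuousOn hf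
  have hintf : Integrable f μ :=
    Integrable.mono' (integrable_const Cf) hmeas
      (by filter_upwards [haem] with z hz; exact hCf z hz)
  set M := (μ Set.univ).toReal with hM
  have hM0 : 0 ≤ M := ENNReal.toReal_nonneg
  have hκpos : ∀ (n : ℕ) (j : Fin (n + 1)), 0 < SzegoQuad.kappa φ n (ζ n j) :=
    fun n j => SzegoQuad.kappa_pos hdeg hlead n _
  have hsumR : ∀ n : ℕ, ∑ j : Fin (n + 1), (SzegoQuad.kappa φ n (ζ n j))⁻¹ = M := by
    intro n
    have h := SzegoQuad.master hμT hdeg hlead horth (hζ1 n) (hζinj n) (hζ0 n) 0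
      (Nat.zero_le n) 1 (by simp)
    simp only [Polynomial.eval_one, pow_zero, mul_one, one_mul] at h
    rw [integral_const] at h
    have h2 : ((M : ℝ) : ℂ)
        = ((∑ j : Fin (n + 1), (SzegoQuad.kappa φ n (ζ n j))⁻¹ : ℝ) : ℂ) := by
      push_cast
      simpa [hM, smul_eq_mul, measureReal_def] using h
    exact_mod_cast h2.symm
  -- Stone–Weierstrass
  set F : C(Metric.sphere (0 : ℂ) 1, ℂ) :=
    ⟨(Metric.sphere (0 : ℂ) 1).restrict f, hf.restrict⟩ with hF
  have hdense := ContinuousMap.starSubalgebra_topologicalClosure_eq_top_of_separatesPoints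
    SzegoQuad.circAlg SzegoQuad.circAlg_separates
  have hFmem : F ∈ closure (SzegoQuad.circAlg : Set C(Metric.sphere (0 : ℂ) 1, ℂ)) := by
    have h1 : F ∈ SzegoQuad.circAlg.topologicalClosure := by
      rw [hdense]
      exact StarSubalgebra.mem_top
    exact h1
  rw [Metric.tendsto_atTop]
  intro ε hε
  have hden : (0 : ℝ) < 2 * M + 1 := by linarith
  set δ := ε / (2 * M + 1) with hδdef
  have hδ : 0 < δ := div_pos hε hden
  have heq : δ * (2 * M + 1) = ε := div_mul_cancel₀ ε hden.ne'
  obtain ⟨g, hgA, hdistg⟩ := Metric.mem_closure_iff.mp hFmem δ hδ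
  obtain ⟨N, p, hpdeg, hrep⟩ := hgA
  refine ⟨N, fun n hn => ?_⟩
  have hgz : ∀ (z : ℂ) (hz : z ∈ Metric.sphere (0 : ℂ) 1),
      g ⟨z, hz⟩ = p.eval z * (conj z) ^ N := by
    intro z hz
    have hz1 : ‖z‖ = 1 := by simpa using mem_sphere_zero_iff_norm.mp hz
    have h1 := hrep ⟨z, hz⟩
    have h2 := SzegoQuad.uc_pow_mul_conj_pow hz1 N
    calc g ⟨z, hz⟩ = g ⟨z, hz⟩ * (z ^ N * (conj z) ^ N) := by rw [h2, mul_one]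
      _ = g ⟨z, hz⟩ * z ^ N * (conj z) ^ N := by ring
      _ = p.eval z * (conj z) ^ N := by rw [h1]
  have hmaster := SzegoQuad.master hμT hdeg hlead horth (hζ1 n) (hζinj n) (hζ0 n) N hn p hpdeg
  have hnode : ∀ j : Fin (n + 1), ‖f (ζ n j) - p.eval (ζ n j) * (conj (ζ n j)) ^ N‖ ≤ δ := by
    intro j
    have h3 : f (ζ n j) = F ⟨ζ n j, hζT n j⟩ := rfl
    rw [h3, ← hgz (ζ n j) (hζT n j), ← dist_eq_norm]
    exact le_trans (ContinuousMap.dist_apply_le_dist _) hdistg.le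
  have hQ2 : (∑ j : Fin (n + 1), f (ζ n j) / christoffelK φ n (ζ n j) (ζ n j))
      = ∑ j : Fin (n + 1),
          f (ζ n j) * (((SzegoQuad.kappa φ n (ζ n j))⁻¹ : ℝ) : ℂ) := by
    refine Finset.sum_congr rfl fun j _ => ?_
    rw [SzegoQuad.christoffelK_diag, div_eq_mul_inv]
    norm_cast
  have hb1 : ‖(∑ j : Fin (n + 1), f (ζ n j) * (((SzegoQuad.kappa φ n (ζ n j))⁻¹ : ℝ) : ℂ))
      - ∫ z, p.eval z * (conj z) ^ N ∂μ‖ ≤ δ * M := by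
    rw [hmaster, ← Finset.sum_sub_distrib]
    refine le_trans (norm_sum_le _ _) ?_
    have hterm : ∀ j ∈ (Finset.univ : Finset (Fin (n + 1))),
        ‖f (ζ n j) * (((SzegoQuad.kappa φ n (ζ n j))⁻¹ : ℝ) : ℂ)
          - (((SzegoQuad.kappa φ n (ζ n j))⁻¹ : ℝ) : ℂ)
            * (p.eval (ζ n j) * (conj (ζ n j)) ^ N)‖
          ≤ (SzegoQuad.kappa φ n (ζ n j))⁻¹ * δ := by
      intro j _
      have h4 : f (ζ n j) * (((SzegoQuad.kappa φ n (ζ n j))⁻¹ : ℝ) : ℂ)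
          - (((SzegoQuad.kappa φ n (ζ n j))⁻¹ : ℝ) : ℂ)
            * (p.eval (ζ n j) * (conj (ζ n j)) ^ N)
          = (((SzegoQuad.kappa φ n (ζ n j))⁻¹ : ℝ) : ℂ)
            * (f (ζ n j) - p.eval (ζ n j) * (conj (ζ n j)) ^ N) := by ring
      rw [h4, norm_mul]
      have hnorm : ‖(((SzegoQuad.kappa φ n (ζ n j))⁻¹ : ℝ) : ℂ)‖
          = (SzegoQuad.kappa φ n (ζ n j))⁻¹ := by
        rw [Complex.norm_real]
        exact abs_of_nonneg (inv_nonneg.mpr (hκpos n j).le)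
      rw [hnorm]
      exact mul_le_mul_of_nonneg_left (hnode j) (inv_nonneg.mpr (hκpos n j).le)
    refine le_trans (Finset.sum_le_sum hterm) ?_
    rw [← Finset.sum_mul, hsumR n]
    exact le_of_eq (mul_comm M δ)
  have hintp : Integrable (fun z => p.eval z * (conj z) ^ N) μ :=
    SzegoQuad.integC hμT (p.continuous.mul (Complex.continuous_conj.pow N))
  have hb2 : ‖(∫ z, p.eval z * (conj z) ^ N ∂μ) - ∫ z, f z ∂μ‖ ≤ δ * M := by
    rw [← integral_sub hintp hintf]
    rw [hM]
    refine norm_integral_le_of_norm_le_const ?_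
    filter_upwards [haem] with z hz
    have h5 := hgz z hz
    have h6 : f z = F ⟨z, hz⟩ := rfl
    rw [← h5, h6, ← dist_eq_norm, dist_comm]
    exact le_trans (ContinuousMap.dist_apply_le_dist _) hdistg.le
  rw [hQ2]
  have htri := dist_triangle
    (∑ j : Fin (n + 1), f (ζ n j) * (((SzegoQuad.kappa φ n (ζ n j))⁻¹ : ℝ) : ℂ))
    (∫ z, p.eval z * (conj z) ^ N ∂μ) (∫ z, f z ∂μ)
  rw [dist_eq_norm, dist_eq_norm, dist_eq_norm] at htri
  rw [dist_eq_norm]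
  calc ‖(∑ j : Fin (n + 1), f (ζ n j) * (((SzegoQuad.kappa φ n (ζ n j))⁻¹ : ℝ) : ℂ))
        - ∫ z, f z ∂μ‖
      ≤ ‖(∑ j : Fin (n + 1), f (ζ n j) * (((SzegoQuad.kappa φ n (ζ n j))⁻¹ : ℝ) : ℂ))
          - ∫ z, p.eval z * (conj z) ^ N ∂μ‖
        + ‖(∫ z, p.eval z * (conj z) ^ N ∂μ) - ∫ z, f z ∂μ‖ := htri
    _ ≤ δ * M + δ * M := add_le_add hb1 hb2
    _ < ε := by nlinarith
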